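/- The harmonic rule with OWA-vector (1, 1/2, 1/3) violates weak monotonicity: there exists a 3-candidate 3-position election, a winning line-up π, and an increase of the score of an assigned candidate-position pair of π, after which π is no longer winning. -/

import Mathlib

open Function

section Defs

variable {C P : Type*}

/-- Utilitarian (summed) score of a line-up. -/
def utilScore [Fintype P] (S : C → P → ℚ) (π : P → C) : ℚ := ∑ p, S (π p) p

/-- Winner under the utilitarian rule. -/
def IsUtilWinner [Fintype P] (S : C → P → ℚ) (π : P → C) : Prop :=
  Function.Injective π ∧
    ∀ π' : P → C, Function.Injective π' → utilScore S π' ≤ utilScore S π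

/-- Egalitarian (minimum) score of a line-up. -/
def egalScore [Fintype P] [Nonempty P] (S : C → P → ℚ) (π : P → C) : ℚ :=
  Finset.univ.inf' Finset.univ_nonempty (fun p => S (π p) p)

/-- Winner under the egalitarian rule. -/
def IsEgalWinner [Fintype P] [Nonempty P] (S : C → P → ℚ) (π : P → C) : Prop :=
  Function.Injective π ∧
    ∀ π' : P → C, Function.Injective π' → egalScore S π' ≤ egalScore S π

/-- Outcome of the sequential rule that fills positions in increasing order of the
priority `r`: each position receives a best candidate among those not assigned to
an earlier position. -/
def FixedOrderOutcome (r : P → ℕ) (S : C → P → ℚ) (π : P → C) : Prop :=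
  Function.Injective π ∧
    ∀ p : P, ∀ c : C, (∀ p' : P, r p' < r p → c ≠ π p') → S c p ≤ S (π p) p

/-- Outcome of some sequential rule: positions are filled one at a time in some order,
each receiving a best remaining candidate. -/
def SeqOutcome (S : C → P → ℚ) (π : P → C) : Prop :=
  ∃ r : P → ℕ, Function.Injective r ∧ FixedOrderOutcome r S π

/-- Outcome of the max-first rule along the order `r`: at each step the assigned
candidate-position pair has maximal score among all remaining pairs. -/
def MaxFirstOrder (r : P → ℕ) (S : C → P → ℚ) (π : P → C) : Prop :=
  Function.Injective π ∧
    ∀ p p'' : P, r p ≤ r p'' → ∀ c : C,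
      (∀ p' : P, r p' < r p → c ≠ π p') → S c p'' ≤ S (π p) p

/-- Outcome of the max-first sequential rule. -/
def MaxFirstOutcome (S : C → P → ℚ) (π : P → C) : Prop :=
  ∃ r : P → ℕ, Function.Injective r ∧ MaxFirstOrder r S π

/-- Outcome of the min-first rule along the order `r`: at each step the filled
position is one whose best remaining candidate score is smallest among the remaining
positions, and it receives a best remaining candidate. -/
def MinFirstOrder (r : P → ℕ) (S : C → P → ℚ) (π : P → C) : Prop :=
  Function.Injective π ∧
    (∀ p : P, ∀ c : C, (∀ p' : P, r p' < r p → c ≠ π p') → S c p ≤ S (π p) p) ∧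
    (∀ p p'' : P, r p ≤ r p'' →
      ∃ c : C, (∀ p' : P, r p' < r p → c ≠ π p') ∧ S (π p) p ≤ S c p'')

/-- Outcome of the min-first sequential rule. -/
def MinFirstOutcome (S : C → P → ℚ) (π : P → C) : Prop :=
  ∃ r : P → ℕ, Function.Injective r ∧ MinFirstOrder r S π

/-- A line-up is reasonably satisfying if (i) there are no two positions `p, p'` with
`score_p(π_{p'}) > score_p(π_p)` and `score_p(π_{p'}) > score_{p'}(π_{p'})`, and
(ii) no unassigned candidate scores higher on some position than its occupant. -/
def ReasonablySatisfying (S : C → P → ℚ) (π : P → C) : Prop :=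
  (¬ ∃ p p' : P, S (π p') p > S (π p) p ∧ S (π p') p > S (π p') p') ∧
  (¬ ∃ (c : C) (p : P), c ∉ Set.range π ∧ S c p > S (π p) p)

/-- A line-up is score Pareto optimal if no line-up is at least as good on every
position and strictly better on some position. -/
def ScoreParetoOptimal (S : C → P → ℚ) (π : P → C) : Prop :=
  ¬ ∃ π' : P → C, Function.Injective π' ∧
      (∀ p : P, S (π p) p ≤ S (π' p) p) ∧ (∃ p : P, S (π p) p < S (π' p) p)

/-- The entries of `v` sorted in decreasing order; `sortedDesc v i` is the
`(i+1)`-st largest entry of `v`. -/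
def sortedDesc {n : ℕ} (v : Fin n → ℚ) : Fin n → ℚ :=
  v ∘ (Tuple.sort (fun i => -v i))

/-- Ordered weighted average of `v` with OWA-vector `Λ`. -/
def owa {n : ℕ} (Λ : Fin n → ℚ) (v : Fin n → ℚ) : ℚ :=
  ∑ i, Λ i * sortedDesc v i

/-- The score vector of a line-up. -/
def scoreVec {q : ℕ} (S : C → Fin q → ℚ) (π : Fin q → C) : Fin q → ℚ :=
  fun p => S (π p) p

/-- Winner under the OWA-rule `f^Λ`. -/
def IsOWAWinner {q : ℕ} (Λ : Fin q → ℚ) (S : C → Fin q → ℚ) (π : Fin q → C) : Prop :=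
  Function.Injective π ∧
    ∀ π' : Fin q → C, Function.Injective π' →
      owa Λ (scoreVec S π') ≤ owa Λ (scoreVec S π)

end Defs


def Sc : Fin 3 → Fin 3 → ℚ := ![![4,1,0], ![19/4,3,0], ![0,0,2]]
def Sc' : Fin 3 → Fin 3 → ℚ := ![![4,1,0], ![19/4,3,0], ![0,0,3]]

lemma fin3cases (i : Fin 3) : i = 0 ∨ i = 1 ∨ i = 2 := by omega

lemma owa3 (v : Fin 3 → ℚ) (a b c : Fin 3) (hab : a ≠ b) (hac : a ≠ c) (hbc : b ≠ c)
    (h1 : v b ≤ v a) (h2 : v c ≤ v b) :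
    owa ![1, 1/2, 1/3] v = v a + (1/2) * v b + (1/3) * v c := by
  have hinj : Function.Injective ![a, b, c] := by
    intro i j hij
    fin_cases i <;> fin_cases j <;> simp_all
  let σ : Equiv.Perm (Fin 3) :=
    Equiv.ofBijective _ ((Finite.injective_iff_bijective).mp hinj)
  have hσ : ∀ i, σ i = ![a, b, c] i := fun i => rfl
  have hmono : Monotone ((fun i => -v i) ∘ σ) := by
    rw [Fin.monotone_iff_le_succ]
    intro i
    fin_cases i <;> simp [hσ] <;> simpa
  have hst : (fun i => -v i) ∘ σ = (fun i => -v i) ∘ Tuple.sort (fun i => -v i) :=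
    (Tuple.comp_sort_eq_comp_iff_monotone).mpr hmono
  have hs : sortedDesc v = v ∘ σ := by
    funext i
    have := congrFun hst i
    simp only [Function.comp, neg_inj] at this
    simp [sortedDesc, Function.comp, ← this]
  rw [owa, Fin.sum_univ_three, hs]
  simp only [Function.comp_apply, hσ, Matrix.cons_val_zero, Matrix.cons_val_one,
    Matrix.head_cons, Matrix.cons_val_two, Matrix.tail_cons]
  ring

lemma owa_le (v : Fin 3 → ℚ) (M : ℚ)
    (h : ∀ a b c : Fin 3, a ≠ b → a ≠ c → b ≠ c → v b ≤ v a → v c ≤ v b →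
      v a + (1/2) * v b + (1/3) * v c ≤ M) :
    owa ![1, 1/2, 1/3] v ≤ M := by
  set σ := Tuple.sort (fun i => -v i) with hσ
  have hmono := Tuple.monotone_sort (fun i => -v i)
  have h01 : v (σ 1) ≤ v (σ 0) := by
    have := hmono (show (0:Fin 3) ≤ 1 by decide); simpa [Function.comp] using this
  have h12 : v (σ 2) ≤ v (σ 1) := by
    have := hmono (show (1:Fin 3) ≤ 2 by decide); simpa [Function.comp] using this
  have hd : ∀ i j : Fin 3, i ≠ j → σ i ≠ σ j := fun i j hij => fun hh => hij (σ.injective hh)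
  calc owa ![1, 1/2, 1/3] v = v (σ 0) + (1/2) * v (σ 1) + (1/3) * v (σ 2) :=
        owa3 v (σ 0) (σ 1) (σ 2) (hd 0 1 (by decide)) (hd 0 2 (by decide))
          (hd 1 2 (by decide)) h01 h12
    _ ≤ M := h _ _ _ (hd 0 1 (by decide)) (hd 0 2 (by decide)) (hd 1 2 (by decide)) h01 h12

set_option maxHeartbeats 1000000 in
/-- The harmonic rule with OWA-vector (1, 1/2, 1/3) violates weak monotonicity. -/
theorem stmt7 : ∃ (S S' : Fin 3 → Fin 3 → ℚ) (π : Fin 3 → Fin 3) (p0 : Fin 3),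
    IsOWAWinner (![1, 1/2, 1/3] : Fin 3 → ℚ) S π ∧ S (π p0) p0 < S' (π p0) p0 ∧
    (∀ (c : Fin 3) (p : Fin 3), (c, p) ≠ (π p0, p0) → S' c p = S c p) ∧
    ¬ IsOWAWinner (![1, 1/2, 1/3] : Fin 3 → ℚ) S' π := by
  refine ⟨Sc, Sc', id, 2, ⟨Function.injective_id, ?_⟩, by norm_num [Sc, Sc', -Matrix.cons_val', Matrix.cons_val_two, Matrix.tail_cons, Matrix.head_cons], ?_, ?_⟩
  · intro π' hinj
    have hid : owa ![1, 1/2, 1/3] (scoreVec Sc id) = 37/6 := by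
      rw [owa3 _ 0 1 2 (by decide) (by decide) (by decide)
          (by norm_num [scoreVec, Sc, -Matrix.cons_val', Matrix.cons_val_two, Matrix.tail_cons, Matrix.head_cons]) (by norm_num [scoreVec, Sc, -Matrix.cons_val', Matrix.cons_val_two, Matrix.tail_cons, Matrix.head_cons])]
      norm_num [scoreVec, Sc, -Matrix.cons_val', Matrix.cons_val_two, Matrix.tail_cons, Matrix.head_cons]
    rw [hid]
    rcases fin3cases (π' 0) with h0 | h0 | h0 <;>
      rcases fin3cases (π' 1) with h1 | h1 | h1 <;>
        rcases fin3cases (π' 2) with h2 | h2 | h2 <;>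
    first
      | exact absurd (hinj (h0.trans h1.symm)) (by decide)
      | exact absurd (hinj (h0.trans h2.symm)) (by decide)
      | exact absurd (hinj (h1.trans h2.symm)) (by decide)
      | · apply owa_le
          intro a b c hab hac hbc hba hcb
          rcases fin3cases a with rfl | rfl | rfl <;>
            rcases fin3cases b with rfl | rfl | rfl <;>
            rcases fin3cases c with rfl | rfl | rfl <;>
            simp only [h0, h1, h2, Sc, scoreVec, Matrix.cons_val_zero, Matrix.cons_val_one,
              Matrix.head_cons, Matrix.cons_val_two, Matrix.tail_cons, ne_eq, Fin.isValue]
              at hab hac hbc hba hcb ⊢ <;>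
            first
              | exact absurd rfl hab
              | exact absurd rfl hac
              | exact absurd rfl hbc
              | exact absurd trivial hab
              | exact absurd trivial hac
              | exact absurd trivial hbc
              | linarith
  · intro c p hcp
    have : c ≠ 2 ∨ p ≠ 2 := by
      by_contra h
      push_neg at h
      exact hcp (by simp [h.1, h.2])
    fin_cases c <;> fin_cases p <;> simp_all [Sc, Sc']
  · rintro ⟨-, hwin⟩
    have h1 : owa ![1, 1/2, 1/3] (scoreVec Sc' ![1, 0, 2]) = 79/12 := by
      rw [owa3 _ 0 2 1 (by decide) (by decide) (by decide)
          (by norm_num [scoreVec, Sc', -Matrix.cons_val', Matrix.cons_val_two, Matrix.tail_cons, Matrix.head_cons]) (by norm_num [scoreVec, Sc', -Matrix.cons_val', Matrix.cons_val_two, Matrix.tail_cons, Matrix.head_cons])]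
      norm_num [scoreVec, Sc', -Matrix.cons_val', Matrix.cons_val_two, Matrix.tail_cons, Matrix.head_cons]
    have h2 : owa ![1, 1/2, 1/3] (scoreVec Sc' id) = 13/2 := by
      rw [owa3 _ 0 1 2 (by decide) (by decide) (by decide)
          (by norm_num [scoreVec, Sc', -Matrix.cons_val', Matrix.cons_val_two, Matrix.tail_cons, Matrix.head_cons]) (by norm_num [scoreVec, Sc', -Matrix.cons_val', Matrix.cons_val_two, Matrix.tail_cons, Matrix.head_cons])]
      norm_num [scoreVec, Sc', -Matrix.cons_val', Matrix.cons_val_two, Matrix.tail_cons, Matrix.head_cons]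
    have hinj : Function.Injective (![1, 0, 2] : Fin 3 → Fin 3) := by decide
    have := hwin ![1, 0, 2] hinj
    rw [h1, h2] at this
    norm_num at this
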